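/- arXiv:1404.0421 — 2 statements merged into one kernel-verified Lean document; each statement's English description precedes it below -/
import Mathlib

section
/- Let G = ⊕_{i=1}^∞ ℤ_{p^i} with metric d(x̄,ȳ) = Σ a_i|x_i−y_i|_{p^i}, with (a_n) chosen so that a_n > 1 + diam of the first n−1 factors and p^n ≥ 2(n+1). Then ANas G ≥ 1; in particular ANas G ≠ las_* G, since las_* G = 0. Thus there exists a countable p-local group with a proper invariant metric whose asymptotic Assouad–Nagata dimension strictly exceeds its asymptotic dimension with linear control. -/
open Metric Set Filter

noncomputable section

/-- Distance between two subsets of a metric space, valued in `ℝ≥0∞`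
(it is `⊤` when one of the sets is empty, matching the convention `inf ∅ = ∞`). -/
def setEDist {X : Type*} [PseudoMetricSpace X] (A B : Set X) : ENNReal :=
  ⨅ a ∈ A, EMetric.infEdist a B

/-- `diLE X lam D n` : the dimension of `X` on the scale `lam` with control `D`
does not exceed `n`, i.e. `X` is covered by `n+1` families of subsets, each family
`lam`-disjoint (distinct members at distance `> lam`) and `D`-uniformly bounded. -/
def diLE (X : Type*) [PseudoMetricSpace X] (lam D : ℝ) (n : ℕ) : Prop :=
  ∃ U : Fin (n + 1) → Set (Set X),
    (∀ i, ∀ A ∈ U i, ∀ B ∈ U i, A ≠ B → ENNReal.ofReal lam < setEDist A B) ∧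
    (∀ i, ∀ A ∈ U i, EMetric.diam A ≤ ENNReal.ofReal D) ∧
    (∀ x : X, ∃ i, ∃ A ∈ U i, x ∈ A)

/-- `lasStarLE X n` : the asymptotic dimension of `X` with linear control is at most `n`. -/
def lasStarLE (X : Type*) [PseudoMetricSpace X] (n : ℕ) : Prop :=
  ∃ c : ℝ, 0 < c ∧ ∀ R : ℝ, ∃ lam : ℝ, R < lam ∧ diLE X lam (c * lam) n

/-- `ANasLE X n` : the asymptotic Assouad–Nagata dimension of `X` is at most `n`. -/
def ANasLE (X : Type*) [PseudoMetricSpace X] (n : ℕ) : Prop :=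
  ∃ c : ℝ, 0 < c ∧ ∃ r₀ : ℝ, ∀ lam : ℝ, r₀ < lam → diLE X lam (c * lam) n

/-- The cyclic word norm on `ℤ/m`: `|z|_m = min(val z, m - val z)`. -/
def cycNorm (m : ℕ) (z : ZMod m) : ℕ := min z.val (m - z.val)

/-- The weighted `ℓ¹` metric on `G = ⊕_{i=1}^∞ ℤ_{p^i}`:
`d(x̄,ȳ) = Σ_i a_i |x_i - y_i|_{p^i}` (here the `i`-th factor, `i : ℕ`, is `ℤ_{p^{i+1}}`). -/
def Gdist (p : ℕ) (a : ℕ → ℕ) (x y : Π₀ i : ℕ, ZMod (p ^ (i + 1))) : ℝ :=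
  ∑ i ∈ (x - y).support, (a i : ℝ) * (cycNorm (p ^ (i + 1)) ((x - y) i) : ℝ)


lemma cycNorm_le_half (m : ℕ) (z : ZMod m) : cycNorm m z ≤ m / 2 := by
  unfold cycNorm
  rcases le_or_gt z.val (m / 2) with h | h
  · exact le_trans (min_le_left _ _) h
  · exact le_trans (min_le_right _ _) (by omega)

lemma one_le_cycNorm (m : ℕ) (hm : 2 ≤ m) (z : ZMod m) (hz : z ≠ 0) :
    1 ≤ cycNorm m z := by
  haveI : NeZero m := ⟨by omega⟩
  have h1 : z.val ≠ 0 := fun h => hz ((ZMod.val_eq_zero z).mp h)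
  have h2 : z.val < m := ZMod.val_lt z
  unfold cycNorm; omega

lemma gdist_le (p : ℕ) (a : ℕ → ℕ) (n : ℕ) (x y : Π₀ i : ℕ, ZMod (p ^ (i + 1)))
    (h : (x - y).support ⊆ Finset.range n) :
    Gdist p a x y ≤ ((∑ i ∈ Finset.range n, a i * (p ^ (i + 1) / 2) : ℕ) : ℝ) := by
  unfold Gdist
  push_cast
  calc ∑ i ∈ (x - y).support, (a i : ℝ) * (cycNorm (p ^ (i + 1)) ((x - y) i) : ℝ)
      ≤ ∑ i ∈ (x - y).support, (a i : ℝ) * ((p ^ (i + 1) / 2 : ℕ) : ℝ) := by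
        refine Finset.sum_le_sum fun i _ => ?_
        exact mul_le_mul_of_nonneg_left (by exact_mod_cast cycNorm_le_half _ _)
          (Nat.cast_nonneg _)
    _ ≤ ∑ i ∈ Finset.range n, (a i : ℝ) * ((p ^ (i + 1) / 2 : ℕ) : ℝ) := by
        refine Finset.sum_le_sum_of_subset_of_nonneg h fun i _ _ => ?_
        positivity

lemma gdist_ge (p : ℕ) (hp : 2 ≤ p) (a : ℕ → ℕ) (i : ℕ) (x y : Π₀ i : ℕ, ZMod (p ^ (i + 1)))
    (h : i ∈ (x - y).support) : (a i : ℝ) ≤ Gdist p a x y := by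
  have hm : 2 ≤ p ^ (i + 1) := le_trans hp (Nat.le_self_pow (by omega) p)
  have hz : (x - y) i ≠ 0 := (DFinsupp.mem_support_iff).mp h
  have h1 : 1 ≤ cycNorm (p ^ (i + 1)) ((x - y) i) := one_le_cycNorm _ hm _ hz
  calc (a i : ℝ) = (a i : ℝ) * 1 := by ring
    _ ≤ (a i : ℝ) * (cycNorm (p ^ (i + 1)) ((x - y) i) : ℝ) := by
        exact mul_le_mul_of_nonneg_left (by exact_mod_cast h1) (Nat.cast_nonneg _)
    _ ≤ Gdist p a x y := by
        unfold Gdist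
        exact Finset.single_le_sum (f := fun i => (a i : ℝ) * (cycNorm (p ^ (i + 1)) ((x - y) i) : ℝ)) (fun j _ => by positivity) h

lemma gdist_single (p : ℕ) (a : ℕ → ℕ) (n : ℕ) (c : ZMod (p ^ (n + 1))) (hc : c ≠ 0)
    (x y : Π₀ i : ℕ, ZMod (p ^ (i + 1))) (h : x - y = (DFinsupp.single n c : Π₀ i : ℕ, ZMod (p ^ (i + 1)))) :
    Gdist p a x y = (a n : ℝ) * (cycNorm (p ^ (n + 1)) c : ℝ) := by
  unfold Gdist
  rw [h, DFinsupp.support_single_ne_zero (β := fun i => ZMod (p ^ (i + 1))) (i := n) hc, Finset.sum_singleton, DFinsupp.single_eq_same]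

lemma gdist_single_single (p : ℕ) (a : ℕ → ℕ) (n : ℕ) (u v : ZMod (p ^ (n + 1)))
    (huv : u ≠ v) :
    Gdist p a (DFinsupp.single (β := fun i => ZMod (p ^ (i + 1))) n u)
      (DFinsupp.single (β := fun i => ZMod (p ^ (i + 1))) n v)
      = (a n : ℝ) * (cycNorm (p ^ (n + 1)) (u - v) : ℝ) := by
  refine gdist_single p a n (u - v) (sub_ne_zero.mpr huv) _ _ ?_
  exact (DFinsupp.single_sub (β := fun i => ZMod (p ^ (i + 1))) n u v).symm

/-- `ANas G ≥ 1` while `las_* G = 0`, so `ANas G ≠ las_* G`. -/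
theorem stmt12 (p : ℕ) (hp : p.Prime) (a : ℕ → ℕ) (hmono : Monotone a)
    (ha : ∀ n : ℕ, 1 + ∑ i ∈ Finset.range n, a i * (p ^ (i + 1) / 2) < a n)
    (hpn : ∀ n : ℕ, 2 * (n + 2) ≤ p ^ (n + 1))
    (X : Type*) [MetricSpace X] (e : X ≃ (Π₀ i : ℕ, ZMod (p ^ (i + 1))))
    (he : ∀ x y : X, dist x y = Gdist p a (e x) (e y)) :
    ¬ ANasLE X 0 ∧ lasStarLE X 0 := by
  have hp2 : 2 ≤ p := hp.two_le
  have hN2 : ∀ n : ℕ, 2 ≤ p ^ (n + 1) := fun n => le_trans hp2 (Nat.le_self_pow (by omega) p)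
  have hhalf : ∀ n : ℕ, n + 2 ≤ p ^ (n + 1) / 2 := fun n => by
    have := hpn n; omega
  have ha0 : 2 ≤ a 0 := by have := ha 0; simp at this; omega
  have hage : ∀ n : ℕ, n + 2 ≤ a n := by
    intro n
    have h1 : (n : ℕ) ≤ ∑ i ∈ Finset.range n, a i * (p ^ (i + 1) / 2) := by
      have hterm : ∀ i ∈ Finset.range n, 1 ≤ a i * (p ^ (i + 1) / 2) := by
        intro i _
        have h2 : 1 ≤ a i := le_trans (by omega) (le_trans ha0 (hmono (Nat.zero_le i)))
        have h3 : 1 ≤ p ^ (i + 1) / 2 := le_trans (by omega) (hhalf i)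
        simpa using Nat.mul_le_mul h2 h3
      calc n = (Finset.range n).card • 1 := by simp
        _ ≤ ∑ i ∈ Finset.range n, a i * (p ^ (i + 1) / 2) :=
            Finset.card_nsmul_le_sum _ _ _ hterm
    have := ha n; omega
  constructor
  · rintro ⟨c, hc, r₀, hr⟩
    obtain ⟨n, hn1, hn2⟩ : ∃ n : ℕ, c < (n : ℝ) + 2 ∧ r₀ < (a n : ℝ) := by
      refine ⟨max ⌈c⌉₊ ⌈r₀⌉₊, ?_, ?_⟩
      · have h1 : c ≤ (⌈c⌉₊ : ℝ) := Nat.le_ceil c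
        have h2 : (⌈c⌉₊ : ℝ) ≤ ((max ⌈c⌉₊ ⌈r₀⌉₊ : ℕ) : ℝ) := by
          exact_mod_cast le_max_left _ _
        linarith
      · have h1 : r₀ ≤ (⌈r₀⌉₊ : ℝ) := Nat.le_ceil r₀
        have h2 : ⌈r₀⌉₊ < a (max ⌈c⌉₊ ⌈r₀⌉₊) := by
          have h3 := hage (max ⌈c⌉₊ ⌈r₀⌉₊)
          have h4 := le_max_right ⌈c⌉₊ ⌈r₀⌉₊
          omega
        have h2' : ((⌈r₀⌉₊ : ℕ) : ℝ) < (a (max ⌈c⌉₊ ⌈r₀⌉₊) : ℝ) := by exact_mod_cast h2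
        linarith
    obtain ⟨U, hdisj, hdiam, hcover⟩ := hr (a n) hn2
    haveI : Fact (1 < p ^ (n + 1)) := ⟨by have := hN2 n; omega⟩
    haveI : NeZero (p ^ (n + 1)) := ⟨by have := hN2 n; omega⟩
    set m := p ^ (n + 1) / 2 with hm
    let pt : ℕ → X := fun k =>
      e.symm (DFinsupp.single (β := fun i => ZMod (p ^ (i + 1))) n (k : ZMod (p ^ (n + 1))))
    have hdist : ∀ j k : ℕ, ((j : ZMod (p ^ (n + 1))) ≠ (k : ZMod (p ^ (n + 1)))) →
        dist (pt j) (pt k)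
          = (a n : ℝ) * (cycNorm (p ^ (n + 1)) ((j : ZMod (p ^ (n + 1))) - k) : ℝ) := by
      intro j k hjk
      show dist (e.symm _) (e.symm _) = _
      rw [he, Equiv.apply_symm_apply, Equiv.apply_symm_apply]
      exact gdist_single_single p a n _ _ hjk
    have hA : ∀ k : ℕ, ∃ A ∈ U 0, pt k ∈ A := by
      intro k
      obtain ⟨i, A, hAU, hxA⟩ := hcover (pt k)
      exact ⟨A, by rwa [Subsingleton.elim (0 : Fin 1) i], hxA⟩
    choose A hAU hptA using hA
    have hd1 : ∀ k : ℕ, dist (pt (k + 1)) (pt k) = (a n : ℝ) := by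
      intro k
      have hdiff : ((k + 1 : ℕ) : ZMod (p ^ (n + 1))) - ((k : ℕ) : ZMod (p ^ (n + 1))) = 1 := by
        push_cast; ring
      have hne : ((k + 1 : ℕ) : ZMod (p ^ (n + 1))) ≠ ((k : ℕ) : ZMod (p ^ (n + 1))) := by
        intro h
        apply one_ne_zero (α := ZMod (p ^ (n + 1)))
        rw [← hdiff, h, sub_self]
      have hcyc1 : cycNorm (p ^ (n + 1)) 1 = 1 := by
        unfold cycNorm
        rw [ZMod.val_one]
        have := hN2 n; omega
      rw [hdist _ _ hne, hdiff, hcyc1]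
      simp
    have hsame : ∀ k : ℕ, A (k + 1) = A k := by
      intro k
      by_contra hne
      have hlt := hdisj 0 (A (k + 1)) (hAU _) (A k) (hAU _) hne
      have hle : setEDist (A (k + 1)) (A k) ≤ ENNReal.ofReal (a n) := by
        calc setEDist (A (k + 1)) (A k) ≤ EMetric.infEdist (pt (k + 1)) (A k) := by
              unfold setEDist
              exact iInf₂_le _ (hptA (k + 1))
          _ ≤ edist (pt (k + 1)) (pt k) := EMetric.infEdist_le_edist_of_mem (hptA k)
          _ = ENNReal.ofReal (a n) := by rw [edist_dist, hd1 k]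
      exact absurd hlt (not_lt.mpr hle)
    have hall : ∀ k : ℕ, A k = A 0 := by
      intro k
      induction k with
      | zero => rfl
      | succ k ih => rw [hsame k, ih]
    have hmlt : m < p ^ (n + 1) := by have := hN2 n; omega
    have hm2 : n + 2 ≤ m := hhalf n
    have hmne : ((m : ℕ) : ZMod (p ^ (n + 1))) ≠ ((0 : ℕ) : ZMod (p ^ (n + 1))) := by
      intro h
      have hval : ((m : ℕ) : ZMod (p ^ (n + 1))).val = m := ZMod.val_cast_of_lt hmlt
      rw [h] at hval
      simp at hval
      omega
    have hdm : dist (pt m) (pt 0) = (a n : ℝ) * (m : ℝ) := by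
      rw [hdist _ _ hmne]
      congr 1
      have hsub : ((m : ℕ) : ZMod (p ^ (n + 1))) - ((0 : ℕ) : ZMod (p ^ (n + 1)))
          = ((m : ℕ) : ZMod (p ^ (n + 1))) := by push_cast; ring
      rw [hsub]
      unfold cycNorm
      rw [ZMod.val_cast_of_lt hmlt]
      have : min m (p ^ (n + 1) - m) = m := by omega
      exact_mod_cast this
    have h1 : edist (pt m) (pt 0) ≤ ENNReal.ofReal (c * a n) := by
      refine le_trans (EMetric.edist_le_diam_of_mem ?_ (hptA 0)) (hdiam 0 (A 0) (hAU 0))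
      rw [← hall m]; exact hptA m
    have han : (0 : ℝ) < (a n : ℝ) := by
      have := hage n
      have : (1 : ℕ) ≤ a n := by omega
      exact_mod_cast lt_of_lt_of_le zero_lt_one (by exact_mod_cast this)
    have hcm : c * (a n : ℝ) < (a n : ℝ) * (m : ℝ) := by
      have hmn : ((n : ℝ) + 2) ≤ (m : ℝ) := by exact_mod_cast hm2
      have : c < (m : ℝ) := lt_of_lt_of_le hn1 hmn
      nlinarith
    have h2 : ENNReal.ofReal (c * a n) < edist (pt m) (pt 0) := by
      rw [edist_dist, hdm]
      refine (ENNReal.ofReal_lt_ofReal_iff ?_).mpr hcm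
      nlinarith
    exact absurd h2 (not_lt.mpr h1)
  · refine ⟨1, one_pos, fun R => ?_⟩
    set n := ⌈R⌉₊ + 1 with hn
    have hRlt : R < (a n : ℝ) - 1 / 2 := by
      have h1 : R ≤ (⌈R⌉₊ : ℝ) := Nat.le_ceil R
      have h2 : ⌈R⌉₊ + 3 ≤ a n := by have := hage n; omega
      have h2' : ((⌈R⌉₊ : ℕ) : ℝ) + 3 ≤ (a n : ℝ) := by exact_mod_cast h2
      linarith
    refine ⟨(a n : ℝ) - 1 / 2, hRlt, ?_⟩
    have han : (2 : ℝ) ≤ (a n : ℝ) := by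
      have := hage n
      have h : (2 : ℕ) ≤ a n := by omega
      exact_mod_cast h
    refine ⟨fun _ => {S | ∃ x : X, S = {y : X | ∀ i, n ≤ i → e y i = e x i}}, ?_, ?_, ?_⟩
    · rintro i A ⟨u, rfl⟩ B ⟨v, rfl⟩ hne
      have hw : ∃ j, n ≤ j ∧ e u j ≠ e v j := by
        by_contra hcon
        push_neg at hcon
        apply hne
        ext y
        constructor <;> intro hy i hi
        · rw [hy i hi]; exact hcon i hi
        · rw [hy i hi]; exact (hcon i hi).symm
      obtain ⟨j, hj, hjne⟩ := hw
      have key : ∀ s, (∀ i, n ≤ i → e s i = e u i) → ∀ t, (∀ i, n ≤ i → e t i = e v i) →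
          (a n : ℝ) ≤ dist s t := by
        intro s hs t ht
        rw [he]
        have hmem : j ∈ (e s - e t).support := by
          rw [DFinsupp.mem_support_iff, DFinsupp.sub_apply, hs j hj, ht j hj]
          exact sub_ne_zero.mpr hjne
        calc (a n : ℝ) ≤ (a j : ℝ) := by exact_mod_cast hmono hj
          _ ≤ Gdist p a (e s) (e t) := gdist_ge p hp2 a j _ _ hmem
      have hlow : ENNReal.ofReal (a n) ≤
          setEDist {y : X | ∀ i, n ≤ i → e y i = e u i} {y : X | ∀ i, n ≤ i → e y i = e v i} := by
        unfold setEDist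
        refine le_iInf₂ fun s hs => ?_
        refine EMetric.le_infEdist.mpr fun t ht => ?_
        rw [edist_dist]
        exact ENNReal.ofReal_le_ofReal (key s hs t ht)
      refine lt_of_lt_of_le ?_ hlow
      refine (ENNReal.ofReal_lt_ofReal_iff ?_).mpr ?_ <;> linarith
    · rintro i A ⟨u, rfl⟩
      refine EMetric.diam_le fun s hs t ht => ?_
      rw [edist_dist, he]
      refine ENNReal.ofReal_le_ofReal ?_
      have hsub : (e s - e t).support ⊆ Finset.range n := by
        intro j hjmem
        rw [Finset.mem_range]
        by_contra hj
        push_neg at hj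
        rw [DFinsupp.mem_support_iff, DFinsupp.sub_apply] at hjmem
        exact hjmem (by rw [hs j hj, ht j hj, sub_self])
      have hb := gdist_le p a n (e s) (e t) hsub
      have hnum : (1 : ℝ) + ((∑ i ∈ Finset.range n, a i * (p ^ (i + 1) / 2) : ℕ) : ℝ)
          < (a n : ℝ) := by exact_mod_cast ha n
      calc Gdist p a (e s) (e t)
          ≤ ((∑ i ∈ Finset.range n, a i * (p ^ (i + 1) / 2) : ℕ) : ℝ) := hb
        _ ≤ 1 * ((a n : ℝ) - 1 / 2) := by linarith
    · intro x
      exact ⟨0, {y : X | ∀ i, n ≤ i → e y i = e x i}, ⟨x, rfl⟩, fun i _ => rfl⟩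
end
end

section
/- The dimension functions las_* and ANas are invariant under quasi-isometry: if f : X → Y is a quasi-isometry of metric spaces, then las_* X = las_* Y and ANas X = ANas Y. -/
open Metric Set Filter

noncomputable section

/-- `fdim X c lam = di_{(lam, c·lam)} X ∈ ℕ ∪ {∞}`, the least `n` with
`di_{(lam, c·lam)} X ≤ n`, or `∞` if there is none. -/
def fdim (X : Type*) [PseudoMetricSpace X] (c lam : ℕ) : ℕ∞ :=
  ⨅ n ∈ {n : ℕ | diLE X (lam : ℝ) ((c : ℝ) * (lam : ℝ)) n}, (n : ℕ∞)

/-- The ultralimit of `f : ℕ → ℕ ∪ {∞}` along the ultrafilter `ω`, in the one-point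
compactification `ℕ ∪ {∞}`: the unique finite value attained `ω`-a.e., or `∞` if none. -/
def ulim (ω : Ultrafilter ℕ) (f : ℕ → ℕ∞) : ℕ∞ :=
  open scoped Classical in
  if h : ∃ v : ℕ, {m | f m = (v : ℕ∞)} ∈ ω then ((Classical.choose h : ℕ) : ℕ∞) else ⊤

/-- `las_ω X`, the asymptotic dimension with linear control with respect to the
ultrafilter `ω` : the minimum over `c` of `lim_ω f_c`. -/
def lasOmega (X : Type*) [PseudoMetricSpace X] (ω : Ultrafilter ℕ) : ℕ∞ :=
  ⨅ c : ℕ, ulim ω (fun lam => fdim X c lam)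

/-- The asymptotic dimension with linear control of `X` as a value in `ℕ ∪ {∞}`. -/
def lasStarDim (X : Type*) [PseudoMetricSpace X] : ℕ∞ :=
  ⨅ n ∈ {n : ℕ | lasStarLE X n}, (n : ℕ∞)

/-- The asymptotic Assouad–Nagata dimension of `X` as a value in `ℕ ∪ {∞}`. -/
def ANasDim (X : Type*) [PseudoMetricSpace X] : ℕ∞ :=
  ⨅ n ∈ {n : ℕ | ANasLE X n}, (n : ℕ∞)

/-- A quasi-isometry of metric spaces. -/
def IsQuasiIsometry {X Y : Type*} [PseudoMetricSpace X] [PseudoMetricSpace Y]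
    (f : X → Y) : Prop :=
  ∃ L : ℝ, 1 ≤ L ∧ ∃ C : ℝ, 0 ≤ C ∧
    (∀ x x' : X,
      L⁻¹ * dist x x' - C ≤ dist (f x) (f x') ∧ dist (f x) (f x') ≤ L * dist x x' + C) ∧
    (∀ y : Y, ∃ x : X, dist y (f x) ≤ C)

lemma diLE_mono {X : Type*} [PseudoMetricSpace X] {lam D D' : ℝ} {n : ℕ}
    (hD : D ≤ D') (h : diLE X lam D n) : diLE X lam D' n := by
  obtain ⟨U, h1, h2, h3⟩ := h
  exact ⟨U, h1, fun i A hA => (h2 i A hA).trans (ENNReal.ofReal_le_ofReal hD), h3⟩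

lemma diLE_pull {X Y : Type*} [PseudoMetricSpace X] [PseudoMetricSpace Y]
    (f : X → Y) {L C : ℝ} (hL : 1 ≤ L) (hC : 0 ≤ C)
    (hlb : ∀ x x' : X, L⁻¹ * dist x x' - C ≤ dist (f x) (f x'))
    (hub : ∀ x x' : X, dist (f x) (f x') ≤ L * dist x x' + C)
    {lam' D : ℝ} (hlam' : 0 ≤ lam') (hD : 0 ≤ D) {n : ℕ}
    (h : diLE Y (L * (lam' + 1) + C) D n) :
    diLE X lam' (L * (D + C)) n := by
  have hL0 : 0 < L := by linarith
  have hLinv : L⁻¹ * L = 1 := inv_mul_cancel₀ (by linarith)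
  obtain ⟨U, h1, h2, h3⟩ := h
  refine ⟨fun i => (fun A : Set Y => f ⁻¹' A) '' U i, ?_, ?_, ?_⟩
  · rintro i A' ⟨A, hA, rfl⟩ B' ⟨B, hB, rfl⟩ hne
    have hAB : A ≠ B := by rintro rfl; exact hne rfl
    have hd := h1 i A hA B hB hAB
    have key : ENNReal.ofReal (lam' + 1) ≤ setEDist (f ⁻¹' A) (f ⁻¹' B) := by
      refine le_iInf₂ fun a ha => ?_
      rw [EMetric.infEdist, Metric.le_infEDist]
      intro b hb
      have h1' : setEDist A B ≤ EMetric.infEdist (f a) B := iInf₂_le (f a) ha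
      have h2' : EMetric.infEdist (f a) B ≤ edist (f a) (f b) :=
        EMetric.infEdist_le_edist_of_mem hb
      have h3' : ENNReal.ofReal (L * (lam' + 1) + C) < ENNReal.ofReal (dist (f a) (f b)) := by
        rw [← edist_dist]; exact lt_of_lt_of_le hd (h1'.trans h2')
      have h4' : L * (lam' + 1) + C < dist (f a) (f b) := by
        have := (ENNReal.ofReal_lt_ofReal_iff_of_nonneg (by nlinarith)).mp h3'
        exact this
      have h5' := hub a b
      have h6' : lam' + 1 ≤ dist a b := by nlinarith
      rw [edist_dist]
      exact ENNReal.ofReal_le_ofReal h6'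
    calc ENNReal.ofReal lam' < ENNReal.ofReal (lam' + 1) := by
          rw [ENNReal.ofReal_lt_ofReal_iff (by linarith)]; linarith
      _ ≤ _ := key
  · rintro i A' ⟨A, hA, rfl⟩
    refine EMetric.diam_le fun a ha b hb => ?_
    have h1' : edist (f a) (f b) ≤ ENNReal.ofReal D :=
      (EMetric.edist_le_diam_of_mem (show f a ∈ A from ha) (show f b ∈ A from hb)).trans
        (h2 i A hA)
    have h2' : dist (f a) (f b) ≤ D := by
      rw [edist_dist] at h1'
      exact (ENNReal.ofReal_le_ofReal_iff hD).mp h1'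
    have h3' := hlb a b
    have h4' : dist a b ≤ L * (D + C) := by
      nlinarith [hLinv, dist_nonneg (x := a) (y := b)]
    rw [edist_dist]
    exact ENNReal.ofReal_le_ofReal h4'
  · intro x
    obtain ⟨i, A, hA, hx⟩ := h3 (f x)
    exact ⟨i, f ⁻¹' A, ⟨A, hA, rfl⟩, hx⟩

lemma lasStarLE_pull {X Y : Type*} [PseudoMetricSpace X] [PseudoMetricSpace Y]
    (f : X → Y) (hf : IsQuasiIsometry f) (n : ℕ) (h : lasStarLE Y n) : lasStarLE X n := by
  obtain ⟨L, hL, C, hC, hbd, -⟩ := hf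
  obtain ⟨c, hc, H⟩ := h
  have hL0 : 0 < L := by linarith
  refine ⟨L * L * c + L * c * (L + C) + L * C + 1,
    by nlinarith [mul_nonneg (mul_nonneg hL0.le hL0.le) hc.le,
      mul_nonneg (mul_nonneg hL0.le hc.le) (show (0:ℝ) ≤ L + C by linarith),
      mul_nonneg hL0.le hC], fun R' => ?_⟩
  obtain ⟨lam, hlam, hdi⟩ := H (L * (max R' 1 + 1) + C)
  set lam' : ℝ := (lam - C) / L - 1 with hlam'def
  have hlamid : lam = L * (lam' + 1) + C := by rw [hlam'def, sub_add_cancel, mul_div_cancel₀ (lam - C) hL0.ne', sub_add_cancel]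
  have hlam'gt : max R' 1 < lam' := by
    rw [hlam'def, lt_sub_iff_add_lt, lt_div_iff₀ hL0]
    nlinarith
  have h1 : 1 ≤ lam' := le_of_lt (lt_of_le_of_lt (le_max_right R' 1) hlam'gt)
  have hlampos : 0 < lam := by nlinarith
  have hdi' : diLE Y (L * (lam' + 1) + C) (c * lam) n := by rw [← hlamid]; exact hdi
  have := diLE_pull f hL hC (fun x x' => (hbd x x').1) (fun x x' => (hbd x x').2)
    (by linarith : (0:ℝ) ≤ lam') (by positivity : (0:ℝ) ≤ c * lam) hdi'
  refine ⟨lam', lt_of_le_of_lt (le_max_left R' 1) hlam'gt, ?_⟩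
  refine diLE_mono ?_ this
  rw [hlamid]
  nlinarith [mul_nonneg (mul_nonneg hL0.le hc.le) (show (0:ℝ) ≤ L + C by linarith),
    mul_nonneg hL0.le hC,
    mul_nonneg (mul_nonneg (mul_nonneg hL0.le hc.le) (show (0:ℝ) ≤ L + C by linarith))
      (show (0:ℝ) ≤ lam' - 1 by linarith),
    mul_nonneg (mul_nonneg hL0.le hC) (show (0:ℝ) ≤ lam' - 1 by linarith)]

lemma ANasLE_pull {X Y : Type*} [PseudoMetricSpace X] [PseudoMetricSpace Y]
    (f : X → Y) (hf : IsQuasiIsometry f) (n : ℕ) (h : ANasLE Y n) : ANasLE X n := by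
  obtain ⟨L, hL, C, hC, hbd, -⟩ := hf
  obtain ⟨c, hc, r₀, H⟩ := h
  have hL0 : 0 < L := by linarith
  refine ⟨L * L * c + L * c * (L + C) + L * C + 1,
    by nlinarith [mul_nonneg (mul_nonneg hL0.le hL0.le) hc.le,
      mul_nonneg (mul_nonneg hL0.le hc.le) (show (0:ℝ) ≤ L + C by linarith),
      mul_nonneg hL0.le hC], max 1 r₀, fun lam' hlam' => ?_⟩
  have h1 : 1 < lam' := lt_of_le_of_lt (le_max_left 1 r₀) hlam'
  have hr : r₀ < lam' := lt_of_le_of_lt (le_max_right 1 r₀) hlam'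
  set lam : ℝ := L * (lam' + 1) + C with hlamdef
  have hlamgt : r₀ < lam := by nlinarith
  have hlampos : 0 < lam := by nlinarith
  have hdi := H lam hlamgt
  have := diLE_pull f hL hC (fun x x' => (hbd x x').1) (fun x x' => (hbd x x').2)
    (by linarith : (0:ℝ) ≤ lam') (by positivity : (0:ℝ) ≤ c * lam) hdi
  refine diLE_mono ?_ this
  rw [hlamdef]
  nlinarith [mul_nonneg (mul_nonneg hL0.le hc.le) (show (0:ℝ) ≤ L + C by linarith),
    mul_nonneg hL0.le hC,
    mul_nonneg (mul_nonneg (mul_nonneg hL0.le hc.le) (show (0:ℝ) ≤ L + C by linarith))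
      (show (0:ℝ) ≤ lam' - 1 by linarith),
    mul_nonneg (mul_nonneg hL0.le hC) (show (0:ℝ) ≤ lam' - 1 by linarith)]

lemma quasiInverse {X Y : Type*} [PseudoMetricSpace X] [PseudoMetricSpace Y]
    (f : X → Y) (hf : IsQuasiIsometry f) : ∃ g : Y → X, IsQuasiIsometry g := by
  obtain ⟨L, hL, C, hC, hbd, hsurj⟩ := hf
  have hL0 : 0 < L := by linarith
  have hLinv : L⁻¹ * L = 1 := inv_mul_cancel₀ (by linarith)
  have hLinv0 : 0 < L⁻¹ := by positivity
  choose g hg using hsurj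
  refine ⟨g, L, hL, 3 * L * C, by positivity, fun y y' => ?_, fun x => ?_⟩
  · have h1 := hg y
    have h2 := hg y'
    have h3 := (hbd (g y) (g y')).1
    have h4 := (hbd (g y) (g y')).2
    have t1 : dist (f (g y)) (f (g y')) ≤ dist y y' + 2 * C := by
      have := dist_triangle (f (g y)) y (f (g y'))
      have := dist_triangle y y' (f (g y'))
      have := dist_comm y (f (g y))
      linarith
    have t2 : dist y y' ≤ dist (f (g y)) (f (g y')) + 2 * C := by
      have := dist_triangle y (f (g y)) y'
      have := dist_triangle (f (g y)) (f (g y')) y'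
      have := dist_comm y' (f (g y'))
      linarith
    have h5 : L⁻¹ * C ≤ C := by
      nlinarith [mul_nonneg (mul_nonneg hC hLinv0.le) (show (0:ℝ) ≤ L - 1 by linarith), hLinv]
    have h6 : C ≤ L * C := le_mul_of_one_le_left hC hL
    constructor
    · have hd : dist y y' ≤ L * dist (g y) (g y') + 3 * C := by linarith
      have key : L⁻¹ * dist y y' ≤ L⁻¹ * (L * dist (g y) (g y') + 3 * C) :=
        mul_le_mul_of_nonneg_left hd hLinv0.le
      have e : L⁻¹ * (L * dist (g y) (g y') + 3 * C)
          = dist (g y) (g y') + 3 * (L⁻¹ * C) := by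
        rw [mul_add, ← mul_assoc, hLinv, one_mul]; ring
      rw [e] at key
      linarith
    · have hd : L⁻¹ * dist (g y) (g y') ≤ dist y y' + 3 * C := by linarith
      have key : L * (L⁻¹ * dist (g y) (g y')) ≤ L * (dist y y' + 3 * C) :=
        mul_le_mul_of_nonneg_left hd hL0.le
      have e : L * (L⁻¹ * dist (g y) (g y')) = dist (g y) (g y') := by
        rw [← mul_assoc, mul_inv_cancel₀ hL0.ne', one_mul]
      have e2 : L * (dist y y' + 3 * C) = L * dist y y' + 3 * L * C := by ring
      rw [e, e2] at key
      linarith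
  · refine ⟨f x, ?_⟩
    have h1 := hg (f x)
    have h2 := (hbd x (g (f x))).1
    have hd : L⁻¹ * dist x (g (f x)) ≤ 2 * C := by linarith
    have key : L * (L⁻¹ * dist x (g (f x))) ≤ L * (2 * C) :=
      mul_le_mul_of_nonneg_left hd hL0.le
    have e : L * (L⁻¹ * dist x (g (f x))) = dist x (g (f x)) := by
      rw [← mul_assoc, mul_inv_cancel₀ hL0.ne', one_mul]
    have e2 : L * (2 * C) = 2 * (L * C) := by ring
    have h6 : 0 ≤ L * C := mul_nonneg hL0.le hC
    rw [e, e2] at key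
    linarith

/-- `las_*` and `ANas` are quasi-isometry invariants. -/
theorem stmt19 {X Y : Type*} [MetricSpace X] [MetricSpace Y] (f : X → Y)
    (hf : IsQuasiIsometry f) :
    lasStarDim X = lasStarDim Y ∧ ANasDim X = ANasDim Y := by
  obtain ⟨g, hg⟩ := quasiInverse f hf
  have e1 : {n : ℕ | lasStarLE X n} = {n : ℕ | lasStarLE Y n} := by
    ext n
    exact ⟨fun h => lasStarLE_pull g hg n h, fun h => lasStarLE_pull f hf n h⟩
  have e2 : {n : ℕ | ANasLE X n} = {n : ℕ | ANasLE Y n} := by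
    ext n
    exact ⟨fun h => ANasLE_pull g hg n h, fun h => ANasLE_pull f hf n h⟩
  constructor
  · unfold lasStarDim; rw [e1]
  · unfold ANasDim; rw [e2]
end
end
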